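/- Let k ≥ 4 be an even integer, p a prime, ε ∈ {+1, −1}, and ℓ ≥ 5 a prime with ε·p^{k/2} ≡ −1 (mod ℓ). Set r = gcd(ℓ−1, k−1), let g₁ be the multiplicative order of p^r modulo ℓ, and put μ_p = ℓ if g₁ = 1 and μ_p = g₁ otherwise. Define 𝔣(n) = σ_{k−1}(n) + ε·p^{k/2}·σ_{k−1}(n/p) (with σ_{k−1}(n/p) = 0 if p ∤ n), and let S₁ = {n ≥ 1 : ℓ ∤ σ_r(n)} and S₂ = {n ≥ 1 : ℓ ∤ 𝔣(n)}. Suppose that for some real numbers α ≠ 0 and γ₁, the function s ↦ L′_{S₁}(s)/L_{S₁}(s) + α/(s−1) tends to γ₁ as s → 1⁺. Then s ↦ L′_{S₂}(s)/L_{S₂}(s) + α/(s−1) tends to γ₁ + (log p)·(μ_p/(p^{μ_p} − 1) − (μ_p − 1)/(p^{μ_p−1} − 1)) as s → 1⁺. -/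

import Mathlib

open Filter Topology

/-- `mySigma m n = ∑_{d ∣ n} d^m`, the sum of `m`-th powers of the divisors of `n`. -/
def mySigma (m n : ℕ) : ℕ := ∑ d ∈ n.divisors, d ^ m

/-- `frak k p ε n = σ_{k-1}(n) + ε p^{k/2} σ_{k-1}(n/p)`, where the last term is `0`
if `p ∤ n`. -/
def frak (k p : ℕ) (ε : ℤ) (n : ℕ) : ℤ :=
  (mySigma (k - 1) n : ℤ) +
    ε * (p : ℤ) ^ (k / 2) * (if p ∣ n then (mySigma (k - 1) (n / p) : ℤ) else 0)

/-- The Dirichlet series `L_S(s) = ∑_{n ∈ S} n^{-s}` of a set `S` of natural numbers. -/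
noncomputable def Lfun (S : Set ℕ) (s : ℝ) : ℝ := ∑' n : S, ((n : ℕ) : ℝ) ^ (-s)


lemma mySigma_eq (m n : ℕ) : mySigma m n = ArithmeticFunction.sigma m n := by
  rw [ArithmeticFunction.sigma_apply]; rfl

lemma mySigma_one (m : ℕ) : mySigma m 1 = 1 := by simp [mySigma]

lemma mySigma_mul {a b : ℕ} (m : ℕ) (h : Nat.Coprime a b) :
    mySigma m (a * b) = mySigma m a * mySigma m b := by
  simp only [mySigma_eq]
  exact ArithmeticFunction.isMultiplicative_sigma.map_mul_of_coprime h

lemma mySigma_prime_pow_cast {ℓ : ℕ} (q : ℕ) (hq : q.Prime) (m a : ℕ) :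
    ((mySigma m (q ^ a) : ℕ) : ZMod ℓ) =
      ∑ i ∈ Finset.range (a + 1), ((q : ZMod ℓ) ^ m) ^ i := by
  rw [mySigma, Nat.sum_divisors_prime_pow hq]
  push_cast
  refine Finset.sum_congr rfl fun i _ => ?_
  rw [← pow_mul, ← pow_mul, mul_comm]

/-- ν-invariant governing divisibility of σ_m at powers of q -/
noncomputable def nuInv (ℓ q m : ℕ) : ℕ :=
  if (q : ZMod ℓ) ^ m = 1 then ℓ else orderOf ((q : ZMod ℓ) ^ m)

lemma dvd_mySigma_pp_iff {ℓ : ℕ} (hℓ : ℓ.Prime) {q : ℕ} (hq : q.Prime)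
    (hq0 : (q : ZMod ℓ) ≠ 0) (m a : ℕ) :
    ℓ ∣ mySigma m (q ^ a) ↔ nuInv ℓ q m ∣ a + 1 := by
  haveI := Fact.mk hℓ
  rw [← ZMod.natCast_eq_zero_iff, mySigma_prime_pow_cast q hq m a]
  set x : ZMod ℓ := (q : ZMod ℓ) ^ m with hx
  by_cases h1 : x = 1
  · rw [nuInv, if_pos (hx ▸ h1), h1]
    simp only [one_pow]
    rw [Finset.sum_const, Finset.card_range, nsmul_eq_mul, mul_one]
    rw [show ((a + 1 : ℕ) : ZMod ℓ) = ((a+1 : ℕ) : ZMod ℓ) by push_cast; ring]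
    exact (ZMod.natCast_eq_zero_iff _ _)
  · rw [nuInv]
    rw [if_neg (by rw [← hx]; exact h1)]
    rw [geom_sum_eq h1]
    constructor
    · intro h
      rcases div_eq_zero_iff.mp h with h' | h'
      · exact orderOf_dvd_of_pow_eq_one (by rwa [sub_eq_zero] at h')
      · exact absurd (by rwa [sub_eq_zero] at h') h1
    · intro h
      rw [orderOf_dvd_iff_pow_eq_one] at h
      rw [h, sub_self, zero_div]

lemma not_dvd_mySigma_pp {ℓ : ℕ} (hℓ : ℓ.Prime) {q : ℕ} (hq : q.Prime)
    (hq0 : (q : ZMod ℓ) = 0) {m : ℕ} (hm : 1 ≤ m) (a : ℕ) :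
    ¬ ℓ ∣ mySigma m (q ^ a) := by
  haveI := Fact.mk hℓ
  rw [← ZMod.natCast_eq_zero_iff, mySigma_prime_pow_cast q hq m a]
  rw [hq0, zero_pow (by omega : m ≠ 0)]
  intro h
  apply one_ne_zero (α := ZMod ℓ)
  rw [← h]
  rw [Finset.sum_eq_single 0]
  · simp
  · intro i _ hi; exact zero_pow hi
  · simp

lemma nuInv_congr {ℓ : ℕ} (hℓ : ℓ.Prime) {q : ℕ} (hq0 : (q : ZMod ℓ) ≠ 0)
    {u v : ℕ} (hu : u ≠ 0) (hv : v ≠ 0)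
    (h : Nat.gcd (orderOf (q : ZMod ℓ)) u = Nat.gcd (orderOf (q : ZMod ℓ)) v) :
    nuInv ℓ q u = nuInv ℓ q v := by
  haveI := Fact.mk hℓ
  set e := orderOf (q : ZMod ℓ) with he
  have h1 : ((q : ZMod ℓ) ^ u = 1) ↔ ((q : ZMod ℓ) ^ v = 1) := by
    rw [← orderOf_dvd_iff_pow_eq_one, ← orderOf_dvd_iff_pow_eq_one, ← he]
    constructor
    · intro hd
      have : Nat.gcd e u = e := Nat.gcd_eq_left hd
      rw [this] at h
      exact h ▸ Nat.gcd_dvd_right e v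
    · intro hd
      have : Nat.gcd e v = e := Nat.gcd_eq_left hd
      rw [this] at h
      exact h.symm ▸ Nat.gcd_dvd_right e u
  rw [nuInv, nuInv]
  by_cases hc : (q : ZMod ℓ) ^ u = 1
  · rw [if_pos hc, if_pos (h1.mp hc)]
  · rw [if_neg hc, if_neg (fun hcv => hc (h1.mpr hcv))]
    rw [orderOf_pow' _ hu, orderOf_pow' _ hv, ← he, h]

lemma mySigma_zero_right (m : ℕ) : mySigma m 0 = 0 := by simp [mySigma]

lemma dvd_mySigma_iff_exists {ℓ : ℕ} (hℓ : ℓ.Prime) (m : ℕ) {n : ℕ} (hn : n ≠ 0) :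
    ℓ ∣ mySigma m n ↔
      ∃ q ∈ n.factorization.support, ℓ ∣ mySigma m (q ^ n.factorization q) := by
  haveI := Fact.mk hℓ
  rw [← ZMod.natCast_eq_zero_iff, mySigma_eq,
    ArithmeticFunction.isMultiplicative_sigma.multiplicative_factorization _ hn,
    Finsupp.prod, Nat.cast_prod, Finset.prod_eq_zero_iff]
  constructor
  · rintro ⟨q, hq, h0⟩
    exact ⟨q, hq, by rwa [← ZMod.natCast_eq_zero_iff, mySigma_eq]⟩
  · rintro ⟨q, hq, h0⟩
    exact ⟨q, hq, by rwa [← mySigma_eq, ZMod.natCast_eq_zero_iff]⟩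

lemma dvd_mySigma_transfer {ℓ : ℕ} (hℓ : ℓ.Prime) {u v : ℕ}
    (hpp : ∀ q a : ℕ, q.Prime → (ℓ ∣ mySigma u (q ^ a) ↔ ℓ ∣ mySigma v (q ^ a)))
    (n : ℕ) : ℓ ∣ mySigma u n ↔ ℓ ∣ mySigma v n := by
  rcases eq_or_ne n 0 with rfl | hn
  · simp [mySigma_zero_right]
  rw [dvd_mySigma_iff_exists hℓ u hn, dvd_mySigma_iff_exists hℓ v hn]
  constructor <;> rintro ⟨q, hq, h⟩ <;>
    exact ⟨q, hq, by
      have hqp : q.Prime := Nat.prime_of_mem_primeFactors (by simpa using hq)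
      first
        | exact (hpp q _ hqp).mp h
        | exact (hpp q _ hqp).mpr h⟩

lemma dvd_mySigma_k_iff_r {ℓ k r : ℕ} (hℓ : ℓ.Prime) (hk : 4 ≤ k) (hℓ5 : 5 ≤ ℓ)
    (hr : r = Nat.gcd (ℓ - 1) (k - 1)) (n : ℕ) :
    ℓ ∣ mySigma (k - 1) n ↔ ℓ ∣ mySigma r n := by
  haveI := Fact.mk hℓ
  have hk1 : k - 1 ≠ 0 := by omega
  have hrpos : r ≠ 0 := by
    rw [hr]
    have : (0:ℕ) < Nat.gcd (ℓ - 1) (k - 1) := Nat.gcd_pos_of_pos_left _ (by omega)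
    omega
  refine dvd_mySigma_transfer hℓ (fun q a hq => ?_) n
  by_cases hq0 : (q : ZMod ℓ) = 0
  · constructor
    · intro h; exact absurd h (not_dvd_mySigma_pp hℓ hq hq0 (by omega) a)
    · intro h; exact absurd h (not_dvd_mySigma_pp hℓ hq hq0 (by omega) a)
  · rw [dvd_mySigma_pp_iff hℓ hq hq0, dvd_mySigma_pp_iff hℓ hq hq0]
    suffices h : nuInv ℓ q (k - 1) = nuInv ℓ q r by rw [h]
    refine nuInv_congr hℓ hq0 hk1 hrpos ?_
    set e := orderOf (q : ZMod ℓ) with he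
    have hel : e ∣ ℓ - 1 :=
      orderOf_dvd_of_pow_eq_one (ZMod.pow_card_sub_one_eq_one hq0)
    calc Nat.gcd e (k - 1) = Nat.gcd (Nat.gcd e (ℓ - 1)) (k - 1) := by
          rw [Nat.gcd_eq_left hel]
      _ = Nat.gcd e (Nat.gcd (ℓ - 1) (k - 1)) := Nat.gcd_assoc _ _ _
      _ = Nat.gcd e r := by rw [hr]

section Main

variable {k p ℓ : ℕ} {ε : ℤ}

lemma p_pow_unit (hℓ : ℓ.Prime) (hk : 4 ≤ k) (hke : Even k)
    (hε : ε = 1 ∨ ε = -1)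
    (hE : (ε : ZMod ℓ) * (p : ZMod ℓ) ^ (k / 2) = -1) :
    (p : ZMod ℓ) ≠ 0 := by
  haveI := Fact.mk hℓ
  have h2 : ((p : ZMod ℓ) ^ (k / 2)) ^ 2 = 1 := by
    rcases hε with rfl | rfl
    · simp only [Int.cast_one, one_mul] at hE
      rw [hE]; ring
    · simp only [Int.cast_neg, Int.cast_one, neg_mul, one_mul, neg_eq_iff_eq_neg,
        neg_neg] at hE
      rw [hE]; ring
  intro h0
  rw [h0] at h2
  rw [zero_pow (by omega : k / 2 ≠ 0)] at h2
  rw [zero_pow (by norm_num : (2:ℕ) ≠ 0)] at h2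
  exact zero_ne_one h2

lemma frak_dvd_iff (hℓ : ℓ.Prime) (hp : p.Prime) (hk : 4 ≤ k) (hke : Even k)
    (hε : ε = 1 ∨ ε = -1)
    (hE : (ε : ZMod ℓ) * (p : ZMod ℓ) ^ (k / 2) = -1)
    (a m : ℕ) (hm : ¬ p ∣ m) :
    (ℓ : ℤ) ∣ frak k p ε (p ^ a * m) ↔ ℓ ∣ mySigma (k - 1) m := by
  haveI := Fact.mk hℓ
  have hp0 : (p : ZMod ℓ) ≠ 0 := p_pow_unit hℓ hk hke hε hE
  have hcop : ∀ c : ℕ, Nat.Coprime (p ^ c) m :=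
    fun c => Nat.Coprime.pow_left c ((Nat.Prime.coprime_iff_not_dvd hp).mpr hm)
  rcases Nat.eq_zero_or_pos a with rfl | ha
  · rw [frak]
    rw [if_neg (by simpa using hm)]
    simp only [pow_zero, one_mul, mul_zero, add_zero]
    exact Int.natCast_dvd_natCast
  · obtain ⟨b, rfl⟩ : ∃ b, a = b + 1 := ⟨a - 1, by omega⟩
    have hdvd : p ∣ p ^ (b + 1) * m := by
      exact Dvd.dvd.mul_right (dvd_pow_self p (by omega)) m
    have hquot : p ^ (b + 1) * m / p = p ^ b * m := by
      rw [pow_succ, mul_comm (p ^ b) p, mul_assoc]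
      exact Nat.mul_div_cancel_left _ hp.pos
    rw [frak, if_pos hdvd, hquot]
    rw [mySigma_mul _ (hcop (b+1)), mySigma_mul _ (hcop b)]
    rw [← ZMod.intCast_zmod_eq_zero_iff_dvd]
    push_cast
    rw [mySigma_prime_pow_cast p hp, mySigma_prime_pow_cast p hp]
    have hx : ∀ X M : ZMod ℓ,
        (∑ i ∈ Finset.range (b + 1 + 1), X ^ i) * M +
          (ε : ZMod ℓ) * (p : ZMod ℓ) ^ (k / 2) *
            ((∑ i ∈ Finset.range (b + 1), X ^ i) * M) = X ^ (b+1) * M := by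
      intro X M
      rw [hE, Finset.sum_range_succ]
      ring
    rw [hx]
    have hxne : ((p : ZMod ℓ) ^ (k - 1)) ^ (b + 1) ≠ 0 :=
      pow_ne_zero _ (pow_ne_zero _ hp0)
    constructor
    · intro h
      rcases mul_eq_zero.mp h with h' | h'
      · exact absurd h' hxne
      · rwa [ZMod.natCast_eq_zero_iff] at h'
    · intro h
      rw [← ZMod.natCast_eq_zero_iff] at h
      rw [h, mul_zero]

end Main

section Mu

variable {p ℓ r g₁ μ : ℕ}

lemma mu_eq_nuInv (hℓ : ℓ.Prime) (hp0 : (p : ZMod ℓ) ≠ 0)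
    (hg₁ : g₁ = orderOf ((p : ZMod ℓ) ^ r))
    (hμ : μ = if g₁ = 1 then ℓ else g₁) :
    μ = nuInv ℓ p r := by
  rw [hμ, nuInv, hg₁]
  by_cases h : (p : ZMod ℓ) ^ r = 1
  · rw [if_pos h, if_pos (orderOf_eq_one_iff.mpr h)]
  · rw [if_neg h, if_neg (fun h' => h (orderOf_eq_one_iff.mp h'))]

lemma two_le_mu (hℓ : ℓ.Prime) (hℓ5 : 5 ≤ ℓ) (hp0 : (p : ZMod ℓ) ≠ 0)
    (hg₁ : g₁ = orderOf ((p : ZMod ℓ) ^ r))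
    (hμ : μ = if g₁ = 1 then ℓ else g₁) : 2 ≤ μ := by
  haveI := Fact.mk hℓ
  rcases eq_or_ne g₁ 1 with h1 | h1
  · rw [hμ, if_pos h1]; omega
  · rw [hμ, if_neg h1]
    have hfin : IsOfFinOrder ((p : ZMod ℓ) ^ r) := by
      refine isOfFinOrder_iff_pow_eq_one.mpr ⟨ℓ - 1, by omega, ?_⟩
      rw [← pow_mul, mul_comm, pow_mul, ZMod.pow_card_sub_one_eq_one hp0, one_pow]
    have := hfin.orderOf_pos
    omega

lemma dvd_sigma_r_p_pow (hℓ : ℓ.Prime) (hp : p.Prime) (hp0 : (p : ZMod ℓ) ≠ 0)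
    (hg₁ : g₁ = orderOf ((p : ZMod ℓ) ^ r))
    (hμ : μ = if g₁ = 1 then ℓ else g₁) (a : ℕ) :
    ℓ ∣ mySigma r (p ^ a) ↔ μ ∣ a + 1 := by
  rw [dvd_mySigma_pp_iff hℓ hp hp0, mu_eq_nuInv hℓ hp0 hg₁ hμ]

end Mu

section Decomp

lemma pow_mul_inj {p : ℕ} (hp : p.Prime) {a b m m' : ℕ} (hm : ¬ p ∣ m) (hm' : ¬ p ∣ m')
    (hm0 : m ≠ 0) (hm0' : m' ≠ 0) (h : p ^ a * m = p ^ b * m') : a = b ∧ m = m' := by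
  have key : ∀ c q : ℕ, ¬ p ∣ q → q ≠ 0 → (p ^ c * q).factorization p = c := by
    intro c q hq hq0
    rw [Nat.factorization_mul (pow_ne_zero c hp.pos.ne') hq0]
    simp only [Finsupp.coe_add, Pi.add_apply]
    rw [hp.factorization_pow, Finsupp.single_eq_same, Nat.factorization_eq_zero_of_not_dvd hq]
    omega
  have hab : a = b := by
    have h1 := key a m hm hm0
    have h2 := key b m' hm' hm0'
    rw [h, h2] at h1; exact h1.symm
  subst hab
  exact ⟨rfl, Nat.eq_of_mul_eq_mul_left (pow_pos hp.pos a) h⟩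

lemma exists_decomp {p : ℕ} (hp : p.Prime) {n : ℕ} (hn : n ≠ 0) :
    ∃ a m : ℕ, ¬ p ∣ m ∧ m ≠ 0 ∧ n = p ^ a * m := by
  refine ⟨n.factorization p, n / p ^ n.factorization p, Nat.not_dvd_ordCompl hp hn,
    (Nat.ordCompl_pos p hn).ne', ?_⟩
  exact (Nat.ordProj_mul_ordCompl_eq_self n p).symm

end Decomp


open Filter Topology

lemma summable_Lfun (S : Set ℕ) {s : ℝ} (hs : 1 < s) :
    Summable (fun n : S => ((n : ℕ) : ℝ) ^ (-s)) := by
  have h : Summable (fun n : ℕ => (n : ℝ) ^ (-s)) := by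
    rw [Real.summable_nat_rpow]; linarith
  exact h.subtype S

lemma Lfun_nonneg (S : Set ℕ) (s : ℝ) : 0 ≤ Lfun S s :=
  tsum_nonneg fun n => Real.rpow_nonneg (Nat.cast_nonneg _) _

lemma one_le_Lfun {S : Set ℕ} (h1 : 1 ∈ S) {s : ℝ} (hs : 1 < s) : 1 ≤ Lfun S s := by
  have := Summable.le_tsum (summable_Lfun S hs) (⟨1, h1⟩ : S)
    (fun b _ => Real.rpow_nonneg (Nat.cast_nonneg _) _)
  simpa [Lfun] using this

lemma hasDerivAt_Lfun (S : Set ℕ) (hS : ∀ n ∈ S, 1 ≤ n) {s : ℝ} (hs : 1 < s) :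
    HasDerivAt (Lfun S) (∑' n : S, -(Real.log n * ((n : ℕ) : ℝ) ^ (-s))) s := by
  set t : ℝ := (1 + s) / 2 with ht_def
  have ht1 : 1 < t := by rw [ht_def]; linarith
  have hts : t < s := by rw [ht_def]; linarith
  set ε : ℝ := (t - 1) / 2 with hε_def
  have hε : 0 < ε := by rw [hε_def]; linarith
  have hεt : ε - t < -1 := by rw [hε_def]; linarith
  have hu : Summable (fun n : S => ((n : ℕ) : ℝ) ^ (ε - t) / ε) := by
    apply Summable.div_const
    have h : Summable (fun n : ℕ => (n : ℝ) ^ (ε - t)) := by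
      rw [Real.summable_nat_rpow]; linarith
    exact h.subtype S
  have hcast : ∀ n : S, (1 : ℝ) ≤ ((n : ℕ) : ℝ) := by
    intro n; exact_mod_cast hS n n.2
  have hg : ∀ (n : S) (y : ℝ), y ∈ Set.Ioi t →
      HasDerivAt (fun z : ℝ => ((n : ℕ) : ℝ) ^ (-z))
        (-(Real.log n * ((n : ℕ) : ℝ) ^ (-y))) y := by
    intro n y _
    have hpos : (0 : ℝ) < ((n : ℕ) : ℝ) := lt_of_lt_of_le one_pos (hcast n)
    have h1 : HasDerivAt (fun z : ℝ => -z) (-1) y := (hasDerivAt_id y).neg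
    have h2 := (Real.hasStrictDerivAt_const_rpow hpos (-y)).hasDerivAt
    have := h2.comp y h1
    exact this.congr_deriv (by ring)
  have hg' : ∀ (n : S) (y : ℝ), y ∈ Set.Ioi t →
      ‖-(Real.log n * ((n : ℕ) : ℝ) ^ (-y))‖ ≤ ((n : ℕ) : ℝ) ^ (ε - t) / ε := by
    intro n y hy
    have h1 : (1 : ℝ) ≤ ((n : ℕ) : ℝ) := hcast n
    have hpos : (0 : ℝ) < ((n : ℕ) : ℝ) := lt_of_lt_of_le one_pos h1
    have hlog : 0 ≤ Real.log n := Real.log_nonneg h1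
    rw [norm_neg, norm_mul, Real.norm_eq_abs, Real.norm_eq_abs, abs_of_nonneg hlog,
      abs_of_nonneg (Real.rpow_nonneg hpos.le _)]
    have hb1 : ((n : ℕ) : ℝ) ^ (-y) ≤ ((n : ℕ) : ℝ) ^ (-t) :=
      Real.rpow_le_rpow_of_exponent_le h1 (by simpa using le_of_lt hy)
    have hb2 : Real.log n ≤ ((n : ℕ) : ℝ) ^ ε / ε := Real.log_le_rpow_div hpos.le hε
    calc Real.log n * ((n : ℕ) : ℝ) ^ (-y)
        ≤ (((n : ℕ) : ℝ) ^ ε / ε) * ((n : ℕ) : ℝ) ^ (-t) := by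
          apply mul_le_mul hb2 hb1 (Real.rpow_nonneg hpos.le _)
          positivity
      _ = ((n : ℕ) : ℝ) ^ (ε - t) / ε := by
          rw [div_mul_eq_mul_div, ← Real.rpow_add hpos]
          ring_nf
  have := hasDerivAt_tsum_of_isPreconnected hu isOpen_Ioi (isPreconnected_Ioi)
    hg hg' (Set.mem_Ioi.mpr hts) (summable_Lfun S hs) (Set.mem_Ioi.mpr hts)
  exact this

section Factor
set_option maxHeartbeats 1000000 in

lemma rpow_term (p : ℕ) (hp : 0 < p) (a m : ℕ) (s : ℝ) :
    ((p ^ a * m : ℕ) : ℝ) ^ (-s) = ((p : ℝ) ^ (-s)) ^ a * ((m : ℕ) : ℝ) ^ (-s) := by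
  have hp0 : (0:ℝ) ≤ (p:ℝ) := Nat.cast_nonneg p
  rw [Nat.cast_mul, Nat.cast_pow, Real.mul_rpow (by positivity) (Nat.cast_nonneg m)]
  congr 1
  rw [← Real.rpow_natCast ((p:ℝ)) a, ← Real.rpow_mul hp0,
    ← Real.rpow_natCast ((p:ℝ) ^ (-s)) a, ← Real.rpow_mul hp0, mul_comm]

lemma tsum_prod_mul {A C : Set ℕ} (g : ↥A → ℝ) (h : ↥C → ℝ)
    (hs : Summable (fun x : ↥A × ↥C => g x.1 * h x.2))
    (h1 : ∀ a : ↥A, Summable (fun m : ↥C => g a * h m)) :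
    ∑' x : ↥A × ↥C, g x.1 * h x.2 = (∑' a : ↥A, g a) * ∑' m : ↥C, h m := by
  rw [Summable.tsum_prod' hs h1]
  rw [← tsum_mul_right]
  exact tsum_congr fun a => by simpa using tsum_mul_left (a := g a) (f := h)

lemma Lfun_factor {p : ℕ} (hp : p.Prime) (A C S : Set ℕ)
    (hC : ∀ m ∈ C, ¬ p ∣ m ∧ m ≠ 0)
    (hSmem : ∀ n, n ∈ S ↔ ∃ a m, a ∈ A ∧ m ∈ C ∧ n = p ^ a * m)
    {s : ℝ} (hs : 1 < s) :
    Lfun S s = (∑' a : A, ((p : ℝ) ^ (-s)) ^ (a : ℕ)) * Lfun C s := by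
  classical
  set F : ↥A × ↥C → ↥S := fun x =>
      (⟨p ^ (x.1 : ℕ) * (x.2 : ℕ), (hSmem _).mpr
        ⟨x.1, x.2, x.1.2, x.2.2, rfl⟩⟩ : ↥S) with hF
  have hf : Function.Bijective F := by
    constructor
    · rintro ⟨⟨a, ha⟩, ⟨m, hm⟩⟩ ⟨⟨a', ha'⟩, ⟨m', hm'⟩⟩ h
      have h' : p ^ a * m = p ^ a' * m' := congrArg Subtype.val h
      obtain ⟨h1, h2⟩ := pow_mul_inj hp (hC m hm).1 (hC m' hm').1 (hC m hm).2 (hC m' hm').2 h'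
      subst h1; subst h2; rfl
    · rintro ⟨n, hn⟩
      obtain ⟨a, m, ha, hm, rfl⟩ := (hSmem n).mp hn
      exact ⟨⟨⟨a, ha⟩, ⟨m, hm⟩⟩, rfl⟩
  set e : (↥A × ↥C) ≃ ↥S := Equiv.ofBijective F hf with he
  have hee : ∀ x : ↥A × ↥C, ((e x : ℕ)) = p ^ (x.1 : ℕ) * (x.2 : ℕ) := fun x => rfl
  have h1 : Lfun S s = ∑' x : ↥A × ↥C, ((p : ℝ) ^ (-s)) ^ ((x.1 : ℕ)) * ((x.2 : ℕ) : ℝ) ^ (-s) := by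
    rw [Lfun, ← e.tsum_eq (fun n : ↥S => ((n : ℕ) : ℝ) ^ (-s))]
    refine tsum_congr fun x => ?_
    show ((e x : ℕ) : ℝ) ^ (-s) = _
    rw [hee x]
    exact rpow_term p hp.pos _ _ s
  rw [h1]
  have hsumm : Summable (fun x : ↥A × ↥C =>
      ((p : ℝ) ^ (-s)) ^ ((x.1 : ℕ)) * ((x.2 : ℕ) : ℝ) ^ (-s)) := by
    have := (e.summable_iff (f := fun n : ↥S => ((n : ℕ) : ℝ) ^ (-s))).mpr (summable_Lfun S hs)
    refine this.congr fun x => ?_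
    show ((e x : ℕ) : ℝ) ^ (-s) = _
    rw [hee x]
    exact (rpow_term p hp.pos _ _ s)
  exact tsum_prod_mul (fun a : ↥A => ((p : ℝ) ^ (-s)) ^ ((a : ℕ)))
    (fun m : ↥C => ((m : ℕ) : ℝ) ^ (-s)) hsumm
    (fun a => (summable_Lfun C hs).mul_left _)

end Factor

section Geo

lemma tsum_geo_univ {x : ℝ} (h0 : 0 ≤ x) (h1 : x < 1) :
    ∑' a : (Set.univ : Set ℕ), x ^ (a : ℕ) = (1 - x)⁻¹ := by
  rw [tsum_univ (fun a : ℕ => x ^ a)]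
  exact tsum_geometric_of_lt_one h0 h1

lemma tsum_geo_nondvd {x : ℝ} (h0 : 0 ≤ x) (h1 : x < 1) {μ : ℕ} (hμ : 2 ≤ μ) :
    ∑' a : ({a : ℕ | ¬ μ ∣ a + 1}), x ^ (a : ℕ)
      = (1 - x)⁻¹ - x ^ (μ - 1) * (1 - x ^ μ)⁻¹ := by
  classical
  set D : Set ℕ := {a : ℕ | μ ∣ a + 1} with hDdef
  have hgeo : Summable (fun a : ℕ => x ^ a) := summable_geometric_of_lt_one h0 h1
  have hxμ0 : 0 ≤ x ^ μ := pow_nonneg h0 μ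
  have hxμ1 : x ^ μ < 1 := pow_lt_one₀ h0 h1 (by omega)
  have hinj : Function.Injective (fun j : ℕ => μ * j + (μ - 1)) := by
    intro j k h
    simp only at h
    have h' : μ * j = μ * k := by omega
    exact Nat.eq_of_mul_eq_mul_left (by omega) h'
  have hD : D = Set.range (fun j : ℕ => μ * j + (μ - 1)) := by
    ext a
    simp only [hDdef, Set.mem_setOf_eq, Set.mem_range]
    constructor
    · rintro ⟨t, ht⟩
      rcases t with _ | j
      · omega
      · refine ⟨j, ?_⟩
        have hh : μ * (j + 1) = μ * j + μ := by ring
        omega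
    · rintro ⟨j, rfl⟩
      refine ⟨j + 1, ?_⟩
      have hh : μ * (j + 1) = μ * j + μ := by ring
      omega
  have hDsum : ∑' a : ↥D, x ^ (a : ℕ) = x ^ (μ - 1) * (1 - x ^ μ)⁻¹ := by
    rw [hD, tsum_range (fun a : ℕ => x ^ a) hinj]
    have : ∀ j : ℕ, x ^ (μ * j + (μ - 1)) = (x ^ μ) ^ j * x ^ (μ - 1) := by
      intro j; rw [pow_add, pow_mul]
    rw [tsum_congr this, tsum_mul_right, tsum_geometric_of_lt_one hxμ0 hxμ1]
    ring
  have key := Summable.tsum_add_tsum_compl (f := fun a : ℕ => x ^ a)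
    (s := D) (hgeo.subtype _) (hgeo.subtype _)
  have hcompl : ({a : ℕ | ¬ μ ∣ a + 1}) = Dᶜ := by
    ext a; simp [hDdef]
  rw [hcompl]
  have htot : ∑' a : ℕ, x ^ a = (1 - x)⁻¹ := tsum_geometric_of_lt_one h0 h1
  rw [hDsum, htot] at key
  linarith

end Geo

section GFun

variable {P : ℝ} (hP : 1 < P)

lemma xfacts (hP : 1 < P) {s : ℝ} (hs : 0 < s) : 0 < P ^ (-s) ∧ P ^ (-s) < 1 :=
  ⟨Real.rpow_pos_of_pos (by linarith) _,
   Real.rpow_lt_one_of_one_lt_of_neg hP (by linarith)⟩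

lemma hasDerivAt_x (hP : 1 < P) (s : ℝ) :
    HasDerivAt (fun t : ℝ => P ^ (-t)) (-(Real.log P * P ^ (-s))) s := by
  have h1 : HasDerivAt (fun t : ℝ => -t) (-1) s := (hasDerivAt_id s).neg
  have h2 := (Real.hasStrictDerivAt_const_rpow (by linarith : (0:ℝ) < P) (-s)).hasDerivAt
  have := h2.comp s h1
  exact this.congr_deriv (by ring)

lemma hasDerivAt_pow_x (hP : 1 < P) (ν : ℕ) (s : ℝ) :
    HasDerivAt (fun t : ℝ => 1 - (P ^ (-t)) ^ (ν + 1))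
      (((ν : ℝ) + 1) * Real.log P * (P ^ (-s)) ^ (ν + 1)) s := by
  have h := ((hasDerivAt_x hP s).pow (ν + 1)).const_sub 1
  refine h.congr_deriv ?_
  simp only [Nat.add_sub_cancel, Nat.cast_add, Nat.cast_one]
  rw [pow_succ]
  ring

end GFun


theorem stmt13 (k p ℓ : ℕ) (hk : 4 ≤ k) (hke : Even k) (hp : p.Prime)
    (ε : ℤ) (hε : ε = 1 ∨ ε = -1) (hℓ : ℓ.Prime) (hℓ5 : 5 ≤ ℓ)
    (hcong : ε * (p : ℤ) ^ (k / 2) ≡ -1 [ZMOD (ℓ : ℤ)])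
    (r : ℕ) (hr : r = Nat.gcd (ℓ - 1) (k - 1))
    (g₁ : ℕ) (hg₁ : g₁ = orderOf ((p : ZMod ℓ) ^ r))
    (μ : ℕ) (hμ : μ = if g₁ = 1 then ℓ else g₁)
    (S₁ S₂ : Set ℕ)
    (hS₁ : S₁ = {n : ℕ | 1 ≤ n ∧ ¬ ℓ ∣ mySigma r n})
    (hS₂ : S₂ = {n : ℕ | 1 ≤ n ∧ ¬ (ℓ : ℤ) ∣ frak k p ε n})
    (α γ₁ : ℝ) (hα : α ≠ 0)
    (hlim : Tendsto (fun s : ℝ => deriv (Lfun S₁) s / Lfun S₁ s + α / (s - 1))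
      (𝓝[>] (1 : ℝ)) (𝓝 γ₁)) :
    Tendsto (fun s : ℝ => deriv (Lfun S₂) s / Lfun S₂ s + α / (s - 1))
      (𝓝[>] (1 : ℝ))
      (𝓝 (γ₁ + Real.log p * ((μ : ℝ) / ((p : ℝ) ^ μ - 1)
        - ((μ : ℝ) - 1) / ((p : ℝ) ^ ((μ : ℝ) - 1) - 1)))) := by
  haveI := Fact.mk hℓ
  -- basic congruence facts
  have hE : (ε : ZMod ℓ) * (p : ZMod ℓ) ^ (k / 2) = -1 := by
    have h := (ZMod.intCast_eq_intCast_iff _ _ _).mpr hcong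
    push_cast at h
    exact h
  have hp0 : (p : ZMod ℓ) ≠ 0 := p_pow_unit hℓ hk hke hε hE
  have hμ2 : 2 ≤ μ := two_le_mu hℓ hℓ5 hp0 hg₁ hμ
  obtain ⟨ν, hν⟩ : ∃ ν : ℕ, μ = ν + 1 := ⟨μ - 1, by omega⟩
  have hν1 : 1 ≤ ν := by omega
  -- the coprime-part set
  set C : Set ℕ := {m : ℕ | ¬ p ∣ m ∧ m ≠ 0 ∧ ¬ ℓ ∣ mySigma r m} with hC
  have hCprop : ∀ m ∈ C, ¬ p ∣ m ∧ m ≠ 0 := fun m hm => ⟨hm.1, hm.2.1⟩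
  -- membership characterizations
  have hS2mem : ∀ n, n ∈ S₂ ↔ ∃ a m, a ∈ (Set.univ : Set ℕ) ∧ m ∈ C ∧ n = p ^ a * m := by
    intro n
    rw [hS₂]
    constructor
    · rintro ⟨h1, hfrak⟩
      obtain ⟨a, m, hpm, hm0, rfl⟩ := exists_decomp hp (by omega : n ≠ 0)
      refine ⟨a, m, Set.mem_univ a, ⟨hpm, hm0, fun hd => hfrak ?_⟩, rfl⟩
      rw [frak_dvd_iff hℓ hp hk hke hε hE a m hpm]
      exact (dvd_mySigma_k_iff_r hℓ hk hℓ5 hr m).mpr hd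
    · rintro ⟨a, m, -, ⟨hpm, hm0, hσ⟩, rfl⟩
      refine ⟨?_, fun hd => hσ ?_⟩
      · have := pow_pos hp.pos a
        have := Nat.pos_of_ne_zero hm0
        exact Nat.one_le_iff_ne_zero.mpr (by positivity)
      · rw [frak_dvd_iff hℓ hp hk hke hε hE a m hpm] at hd
        exact (dvd_mySigma_k_iff_r hℓ hk hℓ5 hr m).mp hd
  have hS1mem : ∀ n, n ∈ S₁ ↔ ∃ a m, a ∈ {a : ℕ | ¬ μ ∣ a + 1} ∧ m ∈ C ∧ n = p ^ a * m := by
    intro n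
    rw [hS₁]
    constructor
    · rintro ⟨h1, hσn⟩
      obtain ⟨a, m, hpm, hm0, rfl⟩ := exists_decomp hp (by omega : n ≠ 0)
      have hcop : Nat.Coprime (p ^ a) m :=
        Nat.Coprime.pow_left a ((Nat.Prime.coprime_iff_not_dvd hp).mpr hpm)
      rw [mySigma_mul r hcop] at hσn
      refine ⟨a, m, ?_, ⟨hpm, hm0, fun hd => hσn (Dvd.dvd.mul_left hd _)⟩, rfl⟩
      intro hdμ
      exact hσn (Dvd.dvd.mul_right
        ((dvd_sigma_r_p_pow hℓ hp hp0 hg₁ hμ a).mpr hdμ) _)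
    · rintro ⟨a, m, ha, ⟨hpm, hm0, hσ⟩, rfl⟩
      have hcop : Nat.Coprime (p ^ a) m :=
        Nat.Coprime.pow_left a ((Nat.Prime.coprime_iff_not_dvd hp).mpr hpm)
      refine ⟨?_, ?_⟩
      · have := pow_pos hp.pos a
        have := Nat.pos_of_ne_zero hm0
        exact Nat.one_le_iff_ne_zero.mpr (by positivity)
      · rw [mySigma_mul r hcop]
        intro hd
        rcases (Nat.Prime.dvd_mul hℓ).mp hd with h' | h'
        · exact ha ((dvd_sigma_r_p_pow hℓ hp hp0 hg₁ hμ a).mp h')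
        · exact hσ h'
  -- real-analytic setup
  set P : ℝ := (p : ℝ) with hPdef
  have hP : 1 < P := by rw [hPdef]; exact_mod_cast hp.one_lt
  set x : ℝ → ℝ := fun t => P ^ (-t) with hxdef
  set Nf : ℝ → ℝ := fun t => 1 - x t ^ (ν + 1) with hNf
  set Df : ℝ → ℝ := fun t => 1 - x t ^ ν with hDf
  set Nd : ℝ → ℝ := fun t => ((ν : ℝ) + 1) * Real.log P * x t ^ (ν + 1) with hNd
  set Dd : ℝ → ℝ := fun t => (ν : ℝ) * Real.log P * x t ^ ν with hDd
  set G : ℝ → ℝ := fun t => Nf t / Df t with hG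
  set H : ℝ → ℝ := fun t => Nd t / Nf t - Dd t / Df t with hH
  have hxf : ∀ t : ℝ, 0 < t → 0 < x t ∧ x t < 1 := fun t ht => xfacts hP ht
  have hNfpos : ∀ t : ℝ, 0 < t → 0 < Nf t := by
    intro t ht
    have := hxf t ht
    have h1 : x t ^ (ν + 1) < 1 := pow_lt_one₀ this.1.le this.2 (by omega)
    simp only [hNf]; linarith
  have hDfpos : ∀ t : ℝ, 0 < t → 0 < Df t := by
    intro t ht
    have := hxf t ht
    have h1 : x t ^ ν < 1 := pow_lt_one₀ this.1.le this.2 (by omega)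
    simp only [hDf]; linarith
  have hxd : ∀ t : ℝ, HasDerivAt x (-(Real.log P * x t)) t := fun t => hasDerivAt_x hP t
  have hNder : ∀ t : ℝ, HasDerivAt Nf (Nd t) t := fun t => hasDerivAt_pow_x hP ν t
  have hDder : ∀ t : ℝ, HasDerivAt Df (Dd t) t := by
    intro t
    rcases Nat.exists_eq_add_of_le hν1 with ⟨w, hw⟩
    rw [hDf, hDd]
    have := hasDerivAt_pow_x hP w t
    simp only [hw]
    convert this using 2 <;> push_cast <;> ring
  have hGder : ∀ t : ℝ, 0 < t →
      HasDerivAt G ((Nd t * Df t - Nf t * Dd t) / (Df t) ^ 2) t := by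
    intro t ht
    exact (hNder t).div (hDder t) (hDfpos t ht).ne'
  -- factorization identities on Ioi 1
  have hfac2 : ∀ s : ℝ, 1 < s → Lfun S₂ s = (1 - x s)⁻¹ * Lfun C s := by
    intro s hs
    rw [Lfun_factor hp (Set.univ) C S₂ hCprop hS2mem hs]
    congr 1
    exact tsum_geo_univ (hxf s (by linarith)).1.le (hxf s (by linarith)).2
  have hfac1 : ∀ s : ℝ, 1 < s →
      Lfun S₁ s = ((1 - x s)⁻¹ - x s ^ ν * (1 - x s ^ (ν + 1))⁻¹) * Lfun C s := by
    intro s hs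
    rw [Lfun_factor hp {a : ℕ | ¬ μ ∣ a + 1} C S₁ hCprop hS1mem hs]
    congr 1
    have := tsum_geo_nondvd (hxf s (by linarith)).1.le (hxf s (by linarith)).2 hμ2
    rw [this]
    rw [hν]
    simp only [Nat.add_sub_cancel]
  -- the multiplicative relation
  have hrel : ∀ s : ℝ, 1 < s → Lfun S₂ s = G s * Lfun S₁ s := by
    intro s hs
    rw [hfac2 s hs, hfac1 s hs, hG]
    have h0 : 0 < x s := (hxf s (by linarith)).1
    have h1 : x s < 1 := (hxf s (by linarith)).2
    have hx1 : (1 : ℝ) - x s ≠ 0 := by linarith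
    have hNs : Nf s ≠ 0 := (hNfpos s (by linarith)).ne'
    have hDs : Df s ≠ 0 := (hDfpos s (by linarith)).ne'
    have expand : Nf s = 1 - x s ^ (ν + 1) := rfl
    have expand2 : Df s = 1 - x s ^ ν := rfl
    rw [← mul_assoc]
    congr 1
    simp only [expand, expand2] at hNs hDs ⊢
    field_simp
    ring_nf
  -- membership of 1 in S₁, positivity of L functions
  have h1S1 : (1 : ℕ) ∈ S₁ := by
    rw [hS₁]
    exact ⟨le_refl 1, by rw [mySigma_one]; exact Nat.Prime.not_dvd_one hℓ⟩
  have hS1ge : ∀ n ∈ S₁, 1 ≤ n := by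
    intro n hn; rw [hS₁] at hn; exact hn.1
  -- pointwise identity of the log-derivative difference on Ioi 1
  have hkey : ∀ s : ℝ, 1 < s →
      deriv (Lfun S₂) s / Lfun S₂ s + α / (s - 1)
        = (deriv (Lfun S₁) s / Lfun S₁ s + α / (s - 1)) + H s := by
    intro s hs
    have hs0 : (0:ℝ) < s := by linarith
    have hL1d := hasDerivAt_Lfun S₁ hS1ge hs
    set d₁ : ℝ := ∑' n : ↥S₁, -(Real.log (n : ℕ) * ((n : ℕ) : ℝ) ^ (-s)) with hd₁
    have hL1L : 1 ≤ Lfun S₁ s := one_le_Lfun h1S1 hs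
    have hL1ne : Lfun S₁ s ≠ 0 := by linarith
    have hGpos : 0 < G s := div_pos (hNfpos s hs0) (hDfpos s hs0)
    have hderiv1 : deriv (Lfun S₁) s = d₁ := hL1d.deriv
    have hprod : HasDerivAt (fun t => G t * Lfun S₁ t)
        ((Nd s * Df s - Nf s * Dd s) / (Df s) ^ 2 * Lfun S₁ s + G s * d₁) s :=
      (hGder s hs0).mul hL1d
    have heq : Lfun S₂ =ᶠ[𝓝 s] fun t => G t * Lfun S₁ t := by
      filter_upwards [isOpen_Ioi.mem_nhds (Set.mem_Ioi.mpr hs)] with t ht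
      exact hrel t ht
    have hderiv2 : deriv (Lfun S₂) s
        = (Nd s * Df s - Nf s * Dd s) / (Df s) ^ 2 * Lfun S₁ s + G s * d₁ := by
      rw [heq.deriv_eq]
      exact hprod.deriv
    rw [hderiv2, hderiv1, hrel s hs, hH, hG]
    have hNs : Nf s ≠ 0 := (hNfpos s hs0).ne'
    have hDs : Df s ≠ 0 := (hDfpos s hs0).ne'
    field_simp
    ring
  -- continuity and value of H at 1
  have hHcont : ContinuousAt H 1 := by
    have hN1 : Nf 1 ≠ 0 := (hNfpos 1 one_pos).ne'
    have hD1 : Df 1 ≠ 0 := (hDfpos 1 one_pos).ne'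
    have cNd : ContinuousAt Nd 1 := (continuousAt_const.mul
      ((hxd 1).continuousAt.pow (ν + 1)))
    have cDd : ContinuousAt Dd 1 := (continuousAt_const.mul
      ((hxd 1).continuousAt.pow ν))
    exact ((cNd.div (hNder 1).continuousAt hN1).sub
      (cDd.div (hDder 1).continuousAt hD1))
  have hμcast : (μ : ℝ) = (ν : ℝ) + 1 := by rw [hν]; push_cast; ring
  have hH1 : H 1 = Real.log p * ((μ : ℝ) / ((p : ℝ) ^ μ - 1)
      - ((μ : ℝ) - 1) / ((p : ℝ) ^ ((μ : ℝ) - 1) - 1)) := by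
    have hx1 : x 1 = P⁻¹ := by
      rw [hxdef]
      simp [Real.rpow_neg_one]
    have hpowμ : (p : ℝ) ^ μ = P ^ (ν + 1) := by rw [hν, hPdef]
    have hrpow : (p : ℝ) ^ ((μ : ℝ) - 1) = P ^ ν := by
      have hcast : (μ : ℝ) - 1 = ((ν : ℕ) : ℝ) := by rw [hμcast]; ring
      rw [hcast, Real.rpow_natCast, hPdef]
    have h1 : (1:ℝ) < P ^ (ν + 1) := one_lt_pow₀ hP (by omega)
    have h2 : (1:ℝ) < P ^ ν := one_lt_pow₀ hP (by omega)
    have hPpos : (0:ℝ) < P := by linarith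
    simp only [hH, hNd, hDd, hNf, hDf, hx1, hpowμ, hrpow, hμcast, ← hPdef, hν,
      Nat.cast_add, Nat.cast_one, add_sub_cancel_right, Real.rpow_natCast]
    rw [inv_pow, inv_pow]
    have e1 : P ^ (ν+1) ≠ 0 := by positivity
    have e2 : P ^ ν ≠ 0 := by positivity
    have e3 : P ^ (ν+1) - 1 ≠ 0 := by linarith
    have e4 : P ^ ν - 1 ≠ 0 := by linarith
    have e5 : (1:ℝ) - (P ^ (ν+1))⁻¹ ≠ 0 := by
      have : (P ^ (ν+1))⁻¹ < 1 := by
        rw [inv_lt_one_iff₀]; right; exact h1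
      linarith
    have e6 : (1:ℝ) - (P ^ ν)⁻¹ ≠ 0 := by
      have : (P ^ ν)⁻¹ < 1 := by
        rw [inv_lt_one_iff₀]; right; exact h2
      linarith
    field_simp
  have hHtend : Tendsto H (𝓝[>] (1:ℝ)) (𝓝 (H 1)) :=
    hHcont.tendsto.mono_left nhdsWithin_le_nhds
  have hadd := hlim.add hHtend
  rw [hH1] at hadd
  refine hadd.congr' ?_
  filter_upwards [self_mem_nhdsWithin] with s hs
  exact (hkey s hs).symm
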